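/- Every finitely generated nilpotent group is Hopfian, i.e., every surjective group endomorphism of a finitely generated nilpotent group is injective. -/

import Mathlib

open Subgroup
open scoped commutatorElement

set_option linter.unusedVariables false

private lemma comm_mul_left' {G : Type*} [Group G] (x y z : G)
    (h : ⁅y, z⁆ ∈ Subgroup.center G) : ⁅x * y, z⁆ = ⁅y, z⁆ * ⁅x, z⁆ := by
  have hcm := Subgroup.mem_center_iff.1 h x
  calc ⁅x * y, z⁆ = x * ⁅y, z⁆ * (x⁻¹ * ⁅x, z⁆) := by
        simp only [commutatorElement_def]; group
    _ = ⁅y, z⁆ * x * (x⁻¹ * ⁅x, z⁆) := by rw [hcm]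
    _ = ⁅y, z⁆ * ⁅x, z⁆ := by group

private lemma comm_mul_right' {G : Type*} [Group G] (x y z : G)
    (h : ⁅x, z⁆ ∈ Subgroup.center G) : ⁅x, y * z⁆ = ⁅x, y⁆ * ⁅x, z⁆ := by
  have hcm := Subgroup.mem_center_iff.1 h y
  calc ⁅x, y * z⁆ = ⁅x, y⁆ * (y * ⁅x, z⁆ * y⁻¹) := by
        simp only [commutatorElement_def]; group
    _ = ⁅x, y⁆ * (⁅x, z⁆ * y * y⁻¹) := by rw [hcm]
    _ = ⁅x, y⁆ * ⁅x, z⁆ := by group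

private lemma comm_inv_right' {G : Type*} [Group G] (x z : G)
    (h : ⁅x, z⁻¹⁆ ∈ Subgroup.center G) : ⁅x, z⁻¹⁆ = ⁅x, z⁆⁻¹ := by
  have hcm := Subgroup.mem_center_iff.1 h z
  have h1 : ⁅x, z⁆⁻¹ = z * ⁅x, z⁻¹⁆ * z⁻¹ := by
    simp only [commutatorElement_def]; group
  rw [hcm, mul_inv_cancel_right] at h1
  exact h1.symm

private lemma comm_inv_left' {G : Type*} [Group G] (x z : G)
    (h : ⁅x⁻¹, z⁆ ∈ Subgroup.center G) : ⁅x⁻¹, z⁆ = ⁅x, z⁆⁻¹ := by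
  have hcm := Subgroup.mem_center_iff.1 h x
  have h1 : ⁅x, z⁆⁻¹ = x * ⁅x⁻¹, z⁆ * x⁻¹ := by
    simp only [commutatorElement_def]; group
  rw [hcm, mul_inv_cancel_right] at h1
  exact h1.symm

private lemma comm_in_closure {G : Type*} [Group G] (S T : Set G)
    (hc : ∀ a ∈ closure S, ∀ b ∈ closure T, ⁅a, b⁆ ∈ Subgroup.center G) :
    ∀ a ∈ closure S, ∀ b ∈ closure T,
      ⁅a, b⁆ ∈ closure (Set.image2 (fun s t => ⁅s, t⁆) S T) := by
  set C := closure (Set.image2 (fun s t => ⁅s, t⁆) S T) with hC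
  intro a ha
  induction ha using Subgroup.closure_induction with
  | mem s hs =>
    intro b hb
    induction hb using Subgroup.closure_induction with
    | mem t ht => exact subset_closure (Set.mem_image2_of_mem hs ht)
    | one => simpa using one_mem C
    | mul b₁ b₂ hb₁ hb₂ ih₁ ih₂ =>
      rw [comm_mul_right' s b₁ b₂ (hc s (subset_closure hs) b₂ hb₂)]
      exact mul_mem ih₁ ih₂
    | inv b hb ih =>
      rw [comm_inv_right' s b (hc s (subset_closure hs) b⁻¹ (inv_mem hb))]
      exact inv_mem ih
  | one => intro b hb; simpa using one_mem C
  | mul a₁ a₂ ha₁ ha₂ ih₁ ih₂ =>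
    intro b hb
    rw [comm_mul_left' a₁ a₂ b (hc a₂ ha₂ b hb)]
    exact mul_mem (ih₂ b hb) (ih₁ b hb)
  | inv a ha ih =>
    intro b hb
    rw [comm_inv_left' a b (hc a⁻¹ (inv_mem ha) b hb)]
    exact inv_mem (ih b hb)

private lemma fg_map' {G G' : Type*} [Group G] [Group G'] (f : G →* G') {K : Subgroup G}
    (h : K.FG) : (K.map f).FG := by
  obtain ⟨S, hS, hfin⟩ := (Subgroup.fg_iff K).1 h
  exact (Subgroup.fg_iff _).2 ⟨f '' S, by rw [← MonoidHom.map_closure, hS], hfin.image f⟩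

private lemma noeth_ext {G : Type*} [Group G] (N : Subgroup G) [N.Normal]
    (hN : ∀ H : Subgroup ↥N, H.FG) (hQ : ∀ H : Subgroup (G ⧸ N), H.FG) :
    ∀ H : Subgroup G, H.FG := by
  classical
  intro H
  obtain ⟨S₁, hS₁, hS₁fin⟩ := (Subgroup.fg_iff _).1 (fg_map' N.subtype (hN (H.subgroupOf N)))
  rw [Subgroup.subgroupOf_map_subtype] at hS₁
  set π := QuotientGroup.mk' N with hπ
  obtain ⟨S₂', hS₂', hS₂'fin⟩ := (Subgroup.fg_iff _).1 (hQ (H.map π))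
  have hsub : S₂' ⊆ ↑(H.map π) := hS₂' ▸ Subgroup.subset_closure
  have hex : ∀ y : S₂', ∃ x, x ∈ H ∧ π x = (y : G ⧸ N) := fun y => by
    obtain ⟨x, hx, hxy⟩ := hsub y.2; exact ⟨x, hx, hxy⟩
  choose g hgH hgπ using hex
  have : Finite S₂' := hS₂'fin.to_subtype
  let S₂ : Set G := Set.range g
  have hS₂fin : S₂.Finite := Set.finite_range g
  have hS₂H : ∀ x ∈ S₂, x ∈ H := by rintro x ⟨y, rfl⟩; exact hgH y
  have himg : π '' S₂ = S₂' := by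
    ext y; constructor
    · rintro ⟨x, ⟨y', rfl⟩, rfl⟩; rw [hgπ y']; exact y'.2
    · intro hy; exact ⟨g ⟨y, hy⟩, ⟨⟨y, hy⟩, rfl⟩, hgπ ⟨y, hy⟩⟩
  refine (Subgroup.fg_iff H).2 ⟨S₁ ∪ S₂, le_antisymm ?_ ?_, hS₁fin.union hS₂fin⟩
  · rw [Subgroup.closure_le]
    rintro x (hx | hx)
    · exact (hS₁ ▸ Subgroup.subset_closure hx : x ∈ H ⊓ N).1
    · exact hS₂H x hx
  · intro h hh
    have : π h ∈ Subgroup.map π (Subgroup.closure S₂) := by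
      rw [MonoidHom.map_closure, himg, hS₂']
      exact ⟨h, hh, rfl⟩
    obtain ⟨s, hs, hsh⟩ := this
    have hsH : s ∈ H := ((Subgroup.closure_le H).2 hS₂H) hs
    have hker : h * s⁻¹ ∈ H ⊓ N := by
      refine ⟨H.mul_mem hh (H.inv_mem hsH), ?_⟩
      have h1 : h * s⁻¹ ∈ π.ker := MonoidHom.mem_ker.2 (by rw [map_mul, map_inv, hsh, mul_inv_cancel])
      rwa [hπ, QuotientGroup.ker_mk'] at h1
    have h1 : h * s⁻¹ ∈ Subgroup.closure (S₁ ∪ S₂) := by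
      rw [← hS₁] at hker
      exact Subgroup.closure_mono Set.subset_union_left hker
    have h2 : s ∈ Subgroup.closure (S₁ ∪ S₂) :=
      Subgroup.closure_mono Set.subset_union_right hs
    simpa using mul_mem h1 h2

private lemma noeth_comm' {A : Type*} [CommGroup A] [Group.FG A] (H : Subgroup A) : H.FG := by
  rw [Subgroup.fg_iff_add_fg]
  have h1 : Module.Finite ℤ (Additive A) := Module.Finite.iff_addGroup_fg.2 inferInstance
  have h3 := IsNoetherian.noetherian (AddSubgroup.toIntSubmodule H.toAddSubgroup)
  rwa [Submodule.fg_iff_addSubgroup_fg, AddSubgroup.toIntSubmodule_toAddSubgroup] at h3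

private lemma lcs_map_eq' {G H : Type*} [Group G] [Group H] (f : G →* H)
    (hf : Function.Surjective f) :
    ∀ n, Subgroup.map f (Subgroup.lowerCentralSeries (⊤ : Subgroup G) n) = Subgroup.lowerCentralSeries (⊤ : Subgroup H) n := by
  intro n
  induction n with
  | zero => simpa using Subgroup.map_top_of_surjective f hf
  | succ m ih =>
    have h1 : Subgroup.lowerCentralSeries (⊤ : Subgroup G) (m + 1) = ⁅Subgroup.lowerCentralSeries (⊤ : Subgroup G) m, ⊤⁆ := rfl
    have h2 : Subgroup.lowerCentralSeries (⊤ : Subgroup H) (m + 1) = ⁅Subgroup.lowerCentralSeries (⊤ : Subgroup H) m, ⊤⁆ := rfl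
    rw [h1, h2, Subgroup.map_commutator, ih, Subgroup.map_top_of_surjective f hf]



private lemma noeth_of_lcs_bot' : ∀ (n : ℕ) (G : Type u) [inst : Group G], ∀ _hfg : Group.FG G,
    Subgroup.lowerCentralSeries (⊤ : Subgroup G) n = ⊥ → ∀ H : Subgroup G, H.FG := by
  intro n
  induction n with
  | zero =>
    intro G _ _ hbot H
    have hH : H = ⊥ := by
      rw [eq_bot_iff, ← hbot]
      exact le_top
    exact (Subgroup.fg_iff H).2 ⟨∅, by rw [Subgroup.closure_empty, hH], Set.finite_empty⟩
  | succ n ih =>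
    intro G _ hfg hbot
    classical
    set Z := Subgroup.lowerCentralSeries (⊤ : Subgroup G) n with hZdef
    have hZcent : Z ≤ Subgroup.center G := by
      intro z hz
      rw [Subgroup.mem_center_iff]
      intro g
      have h1 : ⁅z, g⁆ ∈ Subgroup.lowerCentralSeries (⊤ : Subgroup G) (n + 1) :=
        commutator_mem_commutator hz (mem_top g)
      rw [hbot, Subgroup.mem_bot] at h1
      exact (commutatorElement_eq_one_iff_mul_comm.1 h1).symm
    haveI hZn : Z.Normal := Subgroup.lowerCentralSeries_normal ⊤ n
    set π := QuotientGroup.mk' Z with hπdef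
    have hπsurj : Function.Surjective π := QuotientGroup.mk'_surjective Z
    haveI : Group.FG (G ⧸ Z) := QuotientGroup.fg Z
    have hQbot : Subgroup.lowerCentralSeries (⊤ : Subgroup (G ⧸ Z)) n = ⊥ := by
      rw [← lcs_map_eq' π hπsurj n, ← hZdef, Subgroup.map_eq_bot_iff,
        hπdef, QuotientGroup.ker_mk']
    have hQ : ∀ H : Subgroup (G ⧸ Z), H.FG := ih (G ⧸ Z) inferInstance hQbot
    -- Z is finitely generated
    have hZfg : Z.FG := by
      cases n with
      | zero =>
        have hZtop : Z = ⊤ := rfl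
        rw [hZtop]
        exact hfg.out
      | succ m =>
        have hZm : Z = ⁅Subgroup.lowerCentralSeries (⊤ : Subgroup G) m, ⊤⁆ := rfl
        obtain ⟨S', hS', hS'fin⟩ :=
          (Subgroup.fg_iff _).1 (hQ ((Subgroup.lowerCentralSeries (⊤ : Subgroup G) m).map π))
        have hsub : S' ⊆ ↑((Subgroup.lowerCentralSeries (⊤ : Subgroup G) m).map π) := hS' ▸ Subgroup.subset_closure
        have hex : ∀ y : S', ∃ x, x ∈ Subgroup.lowerCentralSeries (⊤ : Subgroup G) m ∧ π x = (y : G ⧸ Z) := fun y => by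
          obtain ⟨x, hx, hxy⟩ := hsub y.2; exact ⟨x, hx, hxy⟩
        choose gg hggm hggπ using hex
        haveI : Finite S' := hS'fin.to_subtype
        set S : Set G := Set.range gg with hSdef
        have hSfin : S.Finite := Set.finite_range gg
        have hSm : S ⊆ ↑(Subgroup.lowerCentralSeries (⊤ : Subgroup G) m) := by rintro x ⟨y, rfl⟩; exact hggm y
        have himg : π '' S = S' := by
          ext y; constructor
          · rintro ⟨x, ⟨y', rfl⟩, rfl⟩; rw [hggπ y']; exact y'.2
          · intro hy; exact ⟨gg ⟨y, hy⟩, ⟨⟨y, hy⟩, rfl⟩, hggπ ⟨y, hy⟩⟩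
        obtain ⟨T, hT, hTfin⟩ := Group.fg_iff.1 hfg
        have hcS : ∀ a ∈ closure S, ∀ b ∈ closure T, ⁅a, b⁆ ∈ Subgroup.center G := by
          intro a ha b _
          refine hZcent ?_
          rw [hZm]
          exact commutator_mem_commutator ((Subgroup.closure_le _).2 hSm ha) (mem_top b)
        refine (Subgroup.fg_iff Z).2 ⟨Set.image2 (fun s t => ⁅s, t⁆) S T, ?_,
          Set.Finite.image2 _ hSfin hTfin⟩
        apply le_antisymm
        · rw [Subgroup.closure_le]
          rintro x ⟨s, hs, t, ht, rfl⟩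
          rw [hZm, SetLike.mem_coe]
          exact commutator_mem_commutator (hSm hs) (mem_top t)
        · rw [hZm]
          refine Subgroup.commutator_le.2 ?_
          intro a ha g _
          have haQ : π a ∈ Subgroup.map π (closure S) := by
            rw [MonoidHom.map_closure, himg, hS']
            exact ⟨a, ha, rfl⟩
          obtain ⟨s, hs, hsa⟩ := haQ
          have hzmem : s⁻¹ * a ∈ Z := by
            have : π (s⁻¹ * a) = 1 := by rw [map_mul, map_inv, hsa, inv_mul_cancel]
            rwa [hπdef, QuotientGroup.mk'_apply, QuotientGroup.eq_one_iff] at this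
          have hc1 : ⁅s⁻¹ * a, g⁆ = 1 := by
            refine commutatorElement_eq_one_iff_mul_comm.2 ?_
            exact (Subgroup.mem_center_iff.1 (hZcent hzmem) g).symm
          have ha' : a = s * (s⁻¹ * a) := by group
          rw [ha', comm_mul_left' s (s⁻¹ * a) g (by rw [hc1]; exact one_mem _), hc1, one_mul]
          exact comm_in_closure S T hcS s hs g (by rw [hT]; trivial)
    -- assemble via extension
    letI : CommGroup ↥Z :=
      { (inferInstance : Group ↥Z) with
        mul_comm := fun a b =>
          Subtype.ext (Subgroup.mem_center_iff.1 (hZcent b.2) a.1) }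
    haveI : Group.FG ↥Z := (Group.fg_iff_subgroup_fg Z).2 hZfg
    exact noeth_ext Z (fun K => noeth_comm' K) hQ

private def fpow' {G : Type*} [Group G] (f : G →* G) : ℕ → G →* G
  | 0 => MonoidHom.id G
  | n + 1 => (fpow' f n).comp f

private lemma fpow'_comm {G : Type*} [Group G] (f : G →* G) (n : ℕ) (x : G) :
    fpow' f n (f x) = f (fpow' f n x) := by
  induction n generalizing x with
  | zero => rfl
  | succ m ih => simp only [fpow', MonoidHom.comp_apply]; exact ih (f x)

private lemma fpow'_surj {G : Type*} [Group G] (f : G →* G) (hf : Function.Surjective f)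
    (n : ℕ) : Function.Surjective (fpow' f n) := by
  induction n with
  | zero => exact fun x => ⟨x, rfl⟩
  | succ m ih =>
    intro x
    obtain ⟨y, hy⟩ := ih x
    obtain ⟨z, hz⟩ := hf y
    exact ⟨z, by simp [fpow', hz, hy]⟩

private lemma hopf_of_noeth {G : Type*} [Group G]
    (hno : ∀ H : Subgroup G, H.FG) (f : G →* G) (hf : Function.Surjective f) :
    Function.Injective f := by
  classical
  let K : ℕ → Subgroup G := fun m => (fpow' f m).ker
  have hmono : Monotone K := monotone_nat_of_le_succ (by
    intro m x hx
    have hx' : fpow' f m x = 1 := hx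
    show fpow' f (m + 1) x = 1
    show fpow' f m (f x) = 1
    rw [fpow'_comm, hx', map_one])
  obtain ⟨S, hS, hfin⟩ := (Subgroup.fg_iff _).1 (hno (⨆ m, K m))
  have hbound : ∀ s : Set G, s.Finite → (∀ x ∈ s, x ∈ ⨆ m, K m) → ∃ N, ∀ x ∈ s, x ∈ K N := by
    intro s hsfin
    refine Set.Finite.induction_on (motive := fun s _ => (∀ x ∈ s, x ∈ ⨆ m, K m) → ∃ N, ∀ x ∈ s, x ∈ K N)
      s hsfin (fun _ => ⟨0, by simp⟩) ?_
    rintro a s _ _ ih hmem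
    obtain ⟨N, hN⟩ := ih (fun x hx => hmem x (Set.mem_insert_of_mem a hx))
    have ha := hmem a (Set.mem_insert a s)
    rw [Subgroup.mem_iSup_of_directed (hmono.directed_le)] at ha
    obtain ⟨M, hM⟩ := ha
    refine ⟨max N M, ?_⟩
    rintro x (rfl | hx)
    · exact hmono (le_max_right N M) hM
    · exact hmono (le_max_left N M) (hN x hx)
  obtain ⟨N, hN⟩ := hbound S hfin (fun x hx => hS ▸ Subgroup.subset_closure hx)
  have hsup : (⨆ m, K m) ≤ K N := by
    rw [← hS, Subgroup.closure_le]; exact hN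
  rw [← MonoidHom.ker_eq_bot_iff, eq_bot_iff]
  intro x hx
  obtain ⟨y, hy⟩ := fpow'_surj f hf N x
  have hyK : y ∈ K (N + 1) := by
    show fpow' f N (f y) = 1
    rw [fpow'_comm, hy]
    exact hx
  have : y ∈ K N := hsup (le_iSup K (N + 1) hyK)
  have : x = 1 := by rw [← hy]; exact this
  simp [this]

theorem stmt_3 {G : Type*} [Group G] [Group.FG G] [Group.IsNilpotent G]
    (f : G →* G) (hf : Function.Surjective f) : Function.Injective f := by
  obtain ⟨n, hn⟩ := Subgroup.nilpotent_iff_lowerCentralSeries.1 ‹Group.IsNilpotent G›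
  exact hopf_of_noeth (noeth_of_lcs_bot' n G ‹Group.FG G› hn) f hf
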